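/- Let m, n ≥ 1 be integers, d = m + n, and let L ⊆ ℝ^d be a full-rank lattice. Suppose c₁ > 0 and W ⊆ ℝ^d is a linear subspace of dimension m − 1 such that for all x, x′ ∈ L, either x − x′ ∈ W or the Euclidean distance from x − x′ to W is at least c₁ · λ_m(L). Set c₂ = (1 − (2n)^{−1}) · c₁ / √d. Then there exists y ∈ ℝ^m such that the cube [0, c₂ λ_m(L)]^d + (0_n, y) (the translate of [0, c₂ λ_m(L)]^d by the vector of ℝ^n × ℝ^m whose first n coordinates vanish and whose last m coordinates are y) is disjoint from the translate W + x for every x ∈ L. -/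

import Mathlib

/-- The Euclidean (`L²`) norm of a vector. -/
noncomputable def euclNorm {ι : Type*} [Fintype ι] (x : ι → ℝ) : ℝ :=
  Real.sqrt (∑ i, x i ^ 2)

/-- The `i`-th successive minimum of a lattice `L ⊆ ℝ^ι`: the least `r > 0` such that `L`
contains `i` linearly independent vectors of Euclidean norm at most `r`. -/
noncomputable def succMin {ι : Type*} [Fintype ι] (L : Submodule ℤ (ι → ℝ)) (i : ℕ) : ℝ :=
  sInf {r : ℝ | 0 < r ∧ ∃ v : Fin i → (ι → ℝ), (∀ j, v j ∈ L) ∧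
    LinearIndependent ℝ v ∧ ∀ j, euclNorm (v j) ≤ r}

/-- **Lemma 2.6.** Let `d = n + m` and `L ⊆ ℝ^d` be a full-rank lattice, `c₁ > 0`, and
`W ⊆ ℝ^d` a subspace of dimension `m − 1` such that any two elements of `L` either differ by
an element of `W` or their difference is at Euclidean distance at least `c₁ λ_m(L)` from `W`.
With `c₂ = (1 − (2n)⁻¹) c₁ / √d`, there exists `y ∈ ℝ^m` such that the translated cube
`[0, c₂ λ_m(L)]^d + (0_n, y)` is disjoint from every translate `W + x`, `x ∈ L`. -/
lemma euclNorm_nonneg {ι : Type*} [Fintype ι] (x : ι → ℝ) : 0 ≤ euclNorm x :=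
  Real.sqrt_nonneg _

lemma abs_le_euclNorm {ι : Type*} [Fintype ι] (x : ι → ℝ) (i : ι) : |x i| ≤ euclNorm x := by
  rw [← Real.sqrt_sq_eq_abs]
  exact Real.sqrt_le_sqrt (Finset.single_le_sum (fun j _ => sq_nonneg (x j)) (Finset.mem_univ i))

lemma pinorm_le_euclNorm {ι : Type*} [Fintype ι] (x : ι → ℝ) : ‖x‖ ≤ euclNorm x := by
  refine (pi_norm_le_iff_of_nonneg (euclNorm_nonneg x)).2 fun i => ?_
  rw [Real.norm_eq_abs]; exact abs_le_euclNorm x i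

lemma euclNorm_le_card_mul {ι : Type*} [Fintype ι] {x : ι → ℝ} {a : ℝ} (ha : 0 ≤ a)
    (h : ∀ i, |x i| ≤ a) : euclNorm x ≤ Real.sqrt (Fintype.card ι) * a := by
  rw [euclNorm, ← Real.sqrt_sq ha, ← Real.sqrt_mul (by positivity)]
  apply Real.sqrt_le_sqrt
  calc ∑ i, x i ^ 2 ≤ ∑ _i : ι, a ^ 2 :=
        Finset.sum_le_sum fun i _ => by
          rw [← sq_abs]; exact pow_le_pow_left₀ (abs_nonneg _) (h i) 2
    _ = (Fintype.card ι) * a ^ 2 := by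
        rw [Finset.sum_const, nsmul_eq_mul, Finset.card_univ]

lemma lattice_discrete (d : ℕ) (hd : 0 < d) (b : Fin d → (Fin d → ℝ))
    (hb : LinearIndependent ℝ b) :
    ∃ ε > 0, ∀ x ∈ Submodule.span ℤ (Set.range b), x ≠ 0 → ε ≤ euclNorm x := by
  have : Nonempty (Fin d) := ⟨⟨0, hd⟩⟩
  have hcard : Fintype.card (Fin d) = Module.finrank ℝ (Fin d → ℝ) := by
    simp [Module.finrank_fin_fun]
  let B : Module.Basis (Fin d) ℝ (Fin d → ℝ) := basisOfLinearIndependentOfCardEqFinrank hb hcard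
  have hBb : ⇑B = b := coe_basisOfLinearIndependentOfCardEqFinrank hb hcard
  let f : Fin d → ((Fin d → ℝ) →L[ℝ] ℝ) := fun i => LinearMap.toContinuousLinearMap (B.coord i)
  set C : ℝ := 1 + ∑ i, ‖f i‖ with hC
  have hCpos : 0 < C := by positivity
  refine ⟨C⁻¹, by positivity, fun x hx hx0 => ?_⟩
  rw [Submodule.mem_span_range_iff_exists_fun ℤ] at hx
  obtain ⟨c, hc⟩ := hx
  have hxc : x = ∑ i, (c i : ℝ) • B i := by
    rw [← hc, hBb]
    exact Finset.sum_congr rfl fun i _ => (Int.cast_smul_eq_zsmul ℝ (c i) (b i)).symm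
  have hrep : ∀ i, B.repr x i = (c i : ℝ) := by
    intro i; rw [hxc]; exact congrFun (Module.Basis.repr_sum_self B fun j => (c j : ℝ)) i
  have hcne : ∃ i, c i ≠ 0 := by
    by_contra h
    push_neg at h
    exact hx0 (by rw [hxc]; simp [h])
  obtain ⟨i, hi⟩ := hcne
  have h1 : (1 : ℝ) ≤ |(c i : ℝ)| := by
    rw [← Int.cast_abs]; exact_mod_cast Int.one_le_abs hi
  have h2 : |(c i : ℝ)| ≤ ‖f i‖ * ‖x‖ := by
    have := (f i).le_opNorm x
    simpa [f, Real.norm_eq_abs, Module.Basis.coord_apply, hrep i] using this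
  have h3 : ‖f i‖ ≤ C := by
    have : ‖f i‖ ≤ ∑ j, ‖f j‖ :=
      Finset.single_le_sum (fun j _ => norm_nonneg (f j)) (Finset.mem_univ i)
    rw [hC]; linarith
  have h4 : (1:ℝ) ≤ C * euclNorm x :=
    h1.trans (h2.trans (mul_le_mul h3 (pinorm_le_euclNorm x) (norm_nonneg x) hCpos.le))
  rw [inv_le_iff_one_le_mul₀ hCpos]
  linarith [mul_comm C (euclNorm x)]

lemma succMin_pos (n m : ℕ) (hm : 1 ≤ m) (b : Fin (n+m) → (Fin (n+m) → ℝ))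
    (hb : LinearIndependent ℝ b) :
    0 < succMin (Submodule.span ℤ (Set.range b)) m := by
  obtain ⟨ε, hε, hlow⟩ := lattice_discrete (n+m) (by omega) b hb
  set S := {r : ℝ | 0 < r ∧ ∃ v : Fin m → (Fin (n+m) → ℝ),
    (∀ j, v j ∈ Submodule.span ℤ (Set.range b)) ∧
    LinearIndependent ℝ v ∧ ∀ j, euclNorm (v j) ≤ r} with hS
  have hinj : Function.Injective (Fin.natAdd n : Fin m → Fin (n+m)) := by
    intro a a' h
    have := congrArg Fin.val h
    simp only [Fin.natAdd] at this
    exact Fin.ext (by omega)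
  set v : Fin m → (Fin (n+m) → ℝ) := b ∘ Fin.natAdd n with hv
  set r₀ : ℝ := 1 + ∑ j : Fin m, euclNorm (v j) with hr₀
  have hr₀pos : 0 < r₀ := by
    have := Finset.sum_nonneg (fun j (_ : j ∈ Finset.univ) => euclNorm_nonneg (v j))
    rw [hr₀]; linarith
  have hne : S.Nonempty := by
    refine ⟨r₀, hr₀pos, v, fun j => Submodule.subset_span ⟨_, rfl⟩, hb.comp _ hinj, fun j => ?_⟩
    have h1 : euclNorm (v j) ≤ ∑ k : Fin m, euclNorm (v k) :=
      Finset.single_le_sum (fun k _ => euclNorm_nonneg (v k)) (Finset.mem_univ j)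
    rw [hr₀]; linarith
  have hlb : ∀ r ∈ S, ε ≤ r := by
    rintro r ⟨-, u, huL, hui, hun⟩
    have j0 : Fin m := ⟨0, hm⟩
    have hne0 : u j0 ≠ 0 := hui.ne_zero j0
    exact (hlow (u j0) (huL j0) hne0).trans (hun j0)
  exact lt_of_lt_of_le hε (le_csInf hne hlb)

lemma zero_append_add (n m : ℕ) (a b : Fin m → ℝ) :
    Fin.append (fun _ : Fin n => (0:ℝ)) (a + b)
      = Fin.append (fun _ : Fin n => (0:ℝ)) a + Fin.append (fun _ : Fin n => (0:ℝ)) b := by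
  funext i
  simp only [Pi.add_apply]
  refine Fin.addCases (fun j => ?_) (fun j => ?_) i
  · simp only [Fin.append_left]; norm_num
  · simp only [Fin.append_right, Pi.add_apply]

lemma zero_append_smul (n m : ℕ) (r : ℝ) (a : Fin m → ℝ) :
    Fin.append (fun _ : Fin n => (0:ℝ)) (r • a)
      = r • Fin.append (fun _ : Fin n => (0:ℝ)) a := by
  funext i
  simp only [Pi.smul_apply, smul_eq_mul]
  refine Fin.addCases (fun j => ?_) (fun j => ?_) i
  · simp only [Fin.append_left]; norm_num
  · simp only [Fin.append_right, Pi.smul_apply, smul_eq_mul]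

noncomputable def zeroAppendLM (n m : ℕ) : (Fin m → ℝ) →ₗ[ℝ] (Fin (n + m) → ℝ) where
  toFun y := Fin.append (fun _ : Fin n => (0:ℝ)) y
  map_add' a b := zero_append_add n m a b
  map_smul' r a := zero_append_smul n m r a

lemma zeroAppendLM_inj (n m : ℕ) : Function.Injective (zeroAppendLM n m) := by
  intro a a' h
  funext j
  have := congrFun h (Fin.natAdd n j)
  simpa [zeroAppendLM, Fin.append_right] using this

set_option maxHeartbeats 1000000 in
theorem cube_avoiding_subspace_translates (m n : ℕ) (hm : 1 ≤ m) (hn : 1 ≤ n)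
    (b : Fin (n + m) → (Fin (n + m) → ℝ)) (hb : LinearIndependent ℝ b)
    (L : Submodule ℤ (Fin (n + m) → ℝ)) (hL : L = Submodule.span ℤ (Set.range b))
    (c₁ : ℝ) (hc₁ : 0 < c₁)
    (W : Submodule ℝ (Fin (n + m) → ℝ)) (hW : Module.finrank ℝ W = m - 1)
    (hsep : ∀ x ∈ L, ∀ x' ∈ L, x - x' ∈ W ∨
      ∀ w ∈ W, c₁ * succMin L m ≤ euclNorm (x - x' - w)) :
    ∃ y : Fin m → ℝ, ∀ x ∈ L, ∀ z : Fin (n + m) → ℝ,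
      (∀ i, Fin.append (fun _ : Fin n => (0 : ℝ)) y i ≤ z i ∧
        z i ≤ Fin.append (fun _ : Fin n => (0 : ℝ)) y i
            + ((1 - (2 * (n : ℝ))⁻¹) * c₁ / Real.sqrt (n + m)) * succMin L m) →
      z - x ∉ W := by
  by_contra hcon
  push_neg at hcon
  set lam := succMin L m with hlam
  set q : ℝ := Real.sqrt ((n : ℝ) + (m : ℝ)) with hq
  set s : ℝ := (1 - (2 * (n : ℝ))⁻¹) * c₁ / q * lam with hs
  -- basic positivity facts
  have hn1 : (1 : ℝ) ≤ (n : ℝ) := by exact_mod_cast hn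
  have hm0 : (0 : ℝ) ≤ (m : ℝ) := Nat.cast_nonneg m
  have hlampos : 0 < lam := by rw [hlam, hL]; exact succMin_pos n m hm b hb
  have hqpos : 0 < q := by rw [hq]; exact Real.sqrt_pos.2 (by linarith)
  have hinvle : (2 * (n : ℝ))⁻¹ ≤ 1 / 2 := by
    rw [one_div]
    exact inv_anti₀ (by norm_num) (by linarith)
  have hcoef : 0 < 1 - (2 * (n : ℝ))⁻¹ := by linarith
  have hspos : 0 < s := by
    rw [hs]; exact mul_pos (div_pos (mul_pos hcoef hc₁) hqpos) hlampos
  set η : ℝ := c₁ * lam / (q * (4 * (n : ℝ))) with hη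
  have hηpos : 0 < η := by
    rw [hη]; exact div_pos (mul_pos hc₁ hlampos) (mul_pos hqpos (by linarith))
  have hqs : q * s = (1 - (2 * (n : ℝ))⁻¹) * c₁ * lam := by
    rw [hs]; field_simp
  have hqη : q * η = c₁ * lam * (4 * (n : ℝ))⁻¹ := by
    rw [hη]; field_simp
  have hmain : q * (s + η) < c₁ * lam := by
    have hhalf : (4 * (n : ℝ))⁻¹ < (2 * (n : ℝ))⁻¹ := by
      apply inv_strictAnti₀ (by linarith) (by linarith)
    have hcl : 0 < c₁ * lam := mul_pos hc₁ hlampos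
    have : q * (s + η) = c₁ * lam - c₁ * lam * ((2 * (n : ℝ))⁻¹ - (4 * (n : ℝ))⁻¹) := by
      rw [mul_add, hqs, hqη]; ring
    rw [this]
    nlinarith [mul_pos hcl (sub_pos.2 hhalf)]
  -- the key two-witness lemma
  have key : ∀ (y y' : Fin m → ℝ) (x x' z z' : Fin (n + m) → ℝ), x ∈ L → x' ∈ L →
      (∀ i, Fin.append (fun _ : Fin n => (0 : ℝ)) y i ≤ z i ∧
        z i ≤ Fin.append (fun _ : Fin n => (0 : ℝ)) y i + s) →
      (∀ i, Fin.append (fun _ : Fin n => (0 : ℝ)) y' i ≤ z' i ∧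
        z' i ≤ Fin.append (fun _ : Fin n => (0 : ℝ)) y' i + s) →
      z - x ∈ W → z' - x' ∈ W → (∀ j, |y j - y' j| ≤ η) → x - x' ∈ W := by
    intro y y' x x' z z' hx hx' hcz hcz' hw hw' hyy
    rcases hsep x hx x' hx' with h | h
    · exact h
    exfalso
    have hwmem : -((z - x) - (z' - x')) ∈ W := W.neg_mem (W.sub_mem hw hw')
    have hge := h _ hwmem
    have heq : x - x' - (-((z - x) - (z' - x'))) = z - z' := by ring
    rw [heq] at hge
    have happ : ∀ i, |Fin.append (fun _ : Fin n => (0 : ℝ)) y i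
        - Fin.append (fun _ : Fin n => (0 : ℝ)) y' i| ≤ η := by
      intro i
      refine Fin.addCases (fun j => ?_) (fun j => ?_) i
      · simp only [Fin.append_left]
        simpa using hηpos.le
      · simp only [Fin.append_right]
        exact hyy j
    have hzz : ∀ i, |(z - z') i| ≤ s + η := by
      intro i
      have h1 := hcz i
      have h2 := hcz' i
      have h3 := abs_le.1 (happ i)
      rw [Pi.sub_apply, abs_le]
      constructor
      · linarith [h1.1, h2.2, h3.1]
      · linarith [h1.2, h2.1, h3.2]
    have hb2 : euclNorm (z - z') ≤ q * (s + η) := by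
      have h4 := euclNorm_le_card_mul (by linarith : (0:ℝ) ≤ s + η) hzz
      rw [Fintype.card_fin] at h4
      rw [hq]
      have : ((n + m : ℕ) : ℝ) = (n : ℝ) + (m : ℝ) := by push_cast; ring
      rwa [this] at h4
    linarith
  -- chaining
  obtain ⟨x₀, hx₀L, z₀, hz₀, hw₀⟩ := hcon 0
  have step : ∀ k : ℕ, ∀ (y : Fin m → ℝ) (x z : Fin (n + m) → ℝ), x ∈ L →
      (∀ i, Fin.append (fun _ : Fin n => (0 : ℝ)) y i ≤ z i ∧
        z i ≤ Fin.append (fun _ : Fin n => (0 : ℝ)) y i + s) →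
      z - x ∈ W → (∀ j, |y j| ≤ (k : ℝ) * η) → x - x₀ ∈ W := by
    intro k
    induction k with
    | zero =>
      intro y x z hx hcz hw hy
      apply key y 0 x x₀ z z₀ hx hx₀L hcz hz₀ hw hw₀
      intro j
      have h5 := hy j
      have h6 : |y j| ≤ 0 := by simpa using h5
      have : y j = 0 := abs_nonpos_iff.1 h6
      simp [this]
      exact hηpos.le
    | succ k ih =>
      intro y x z hx hcz hw hy
      set y' : Fin m → ℝ := ((k : ℝ) / ((k : ℝ) + 1)) • y with hy'
      obtain ⟨x', hx'L, z', hcz', hw'⟩ := hcon y'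
      have hk1 : (0 : ℝ) < (k : ℝ) + 1 := by positivity
      have hyk : ∀ j, |y j| ≤ ((k : ℝ) + 1) * η := by
        intro j
        have := hy j
        push_cast at this
        linarith
      have hIH : x' - x₀ ∈ W := by
        apply ih y' x' z' hx'L hcz' hw'
        intro j
        have h7 : y' j = ((k : ℝ) / ((k : ℝ) + 1)) * y j := rfl
        rw [h7, abs_mul, abs_of_nonneg (by positivity : (0:ℝ) ≤ (k : ℝ) / ((k : ℝ) + 1))]
        rw [div_mul_eq_mul_div, div_le_iff₀ hk1]
        have h8 : (k : ℝ) * |y j| ≤ (k : ℝ) * (((k : ℝ) + 1) * η) :=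
          mul_le_mul_of_nonneg_left (hyk j) (Nat.cast_nonneg k)
        nlinarith [hηpos.le, Nat.cast_nonneg (α := ℝ) k]
      have hkey : x - x' ∈ W := by
        apply key y y' x x' z z' hx hx'L hcz hcz' hw hw'
        intro j
        have h7 : y j - y' j = (1 / ((k : ℝ) + 1)) * y j := by
          have : y' j = ((k : ℝ) / ((k : ℝ) + 1)) * y j := rfl
          rw [this]
          field_simp
          ring
        rw [h7, abs_mul, abs_of_nonneg (by positivity : (0:ℝ) ≤ 1 / ((k : ℝ) + 1))]
        have h8 : 1 / ((k : ℝ) + 1) * |y j| ≤ 1 / ((k : ℝ) + 1) * (((k : ℝ) + 1) * η) :=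
          mul_le_mul_of_nonneg_left (hyk j) (by positivity)
        have h9 : 1 / ((k : ℝ) + 1) * (((k : ℝ) + 1) * η) = η := by field_simp
        linarith
      have h9 := W.add_mem hkey hIH
      rwa [sub_add_sub_cancel] at h9
  have allW : ∀ (y : Fin m → ℝ) (x z : Fin (n + m) → ℝ), x ∈ L →
      (∀ i, Fin.append (fun _ : Fin n => (0 : ℝ)) y i ≤ z i ∧
        z i ≤ Fin.append (fun _ : Fin n => (0 : ℝ)) y i + s) →
      z - x ∈ W → x - x₀ ∈ W := by
    intro y x z hx hcz hw
    obtain ⟨k, hk⟩ := exists_nat_ge (euclNorm y / η)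
    apply step k y x z hx hcz hw
    intro j
    have h1 : |y j| ≤ euclNorm y := abs_le_euclNorm y j
    have h2 : euclNorm y ≤ (k : ℝ) * η := by
      rw [div_le_iff₀ hηpos] at hk
      exact hk
    exact h1.trans h2
  -- a direction outside W
  have hexy : ∃ ys : Fin m → ℝ, Fin.append (fun _ : Fin n => (0 : ℝ)) ys ∉ W := by
    by_contra hall
    push_neg at hall
    have hrange : LinearMap.range (zeroAppendLM n m) ≤ W := by
      rintro - ⟨y, rfl⟩
      exact hall y
    have h1 : Module.finrank ℝ (LinearMap.range (zeroAppendLM n m)) = m := by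
      rw [LinearMap.finrank_range_of_inj (zeroAppendLM_inj n m)]
      simp [Module.finrank_fin_fun]
    have h2 := Submodule.finrank_mono hrange
    rw [h1, hW] at h2
    omega
  obtain ⟨ys, hys⟩ := hexy
  -- final contradiction
  have hWclosed : IsClosed (W : Set (Fin (n + m) → ℝ)) := Submodule.closed_of_finiteDimensional W
  set v : Fin (n + m) → ℝ := Fin.append (fun _ : Fin n => (0 : ℝ)) ys with hv
  set g := Metric.infDist v (W : Set (Fin (n + m) → ℝ)) with hg
  have hgpos : 0 < g := by
    rw [hg]
    exact (hWclosed.notMem_iff_infDist_pos ⟨0, W.zero_mem⟩).1 hys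
  set T : ℝ := (‖x₀‖ + s + 1) / g with hT
  have hTpos : 0 < T := by
    rw [hT]
    apply div_pos _ hgpos
    have := norm_nonneg x₀
    linarith
  obtain ⟨x, hxL, z, hcz, hw⟩ := hcon (T • ys)
  have hxW : z - x₀ ∈ W := by
    have h1 := allW (T • ys) x z hxL hcz hw
    have h2 := W.add_mem hw h1
    rwa [sub_add_sub_cancel] at h2
  set c : Fin (n + m) → ℝ := z - Fin.append (fun _ : Fin n => (0 : ℝ)) (T • ys) with hcdef
  have hcnorm : ‖c‖ ≤ s := by
    rw [pi_norm_le_iff_of_nonneg hspos.le]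
    intro i
    rw [Real.norm_eq_abs, hcdef, Pi.sub_apply, abs_le]
    have h3 := hcz i
    exact ⟨by linarith [h3.1], by linarith [h3.2]⟩
  have hTA : Fin.append (fun _ : Fin n => (0 : ℝ)) (T • ys) = T • v := by
    rw [hv]; exact zero_append_smul n m T ys
  have hzeq : T • v = z - c := by rw [hcdef, hTA, sub_sub_cancel]
  have hvy : v = T⁻¹ • (z - c) := by
    rw [← hzeq, smul_smul, inv_mul_cancel₀ (ne_of_gt hTpos), one_smul]
  have hmemW : T⁻¹ • (z - x₀) ∈ W := W.smul_mem _ hxW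
  have hd1 : g ≤ dist v (T⁻¹ • (z - x₀)) := by
    rw [hg]; exact Metric.infDist_le_dist_of_mem hmemW
  rw [dist_eq_norm, hvy, ← smul_sub] at hd1
  have h9 : (z - c) - (z - x₀) = x₀ - c := by ring
  rw [h9, norm_smul, Real.norm_eq_abs, abs_of_pos (inv_pos.2 hTpos)] at hd1
  have h10 : ‖x₀ - c‖ ≤ ‖x₀‖ + s := (norm_sub_le _ _).trans (by linarith [hcnorm])
  have h11 : T⁻¹ * ‖x₀ - c‖ ≤ T⁻¹ * (‖x₀‖ + s) :=
    mul_le_mul_of_nonneg_left h10 (inv_pos.2 hTpos).le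
  have h12 : T⁻¹ * (‖x₀‖ + s) < g := by
    have hX : (0:ℝ) < ‖x₀‖ + s + 1 := by linarith [norm_nonneg x₀]
    rw [hT, inv_div, div_mul_eq_mul_div, div_lt_iff₀ hX]
    nlinarith [norm_nonneg x₀]
  linarith
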